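/- Define for β₁ ∈ (1, √2) the function F(β₁) := E(κ(β₁)) + (β₁² - 2) K(κ(β₁)), where κ(β₁) = √(2(β₁²-1))/β₁. Then F(β₁) > 0 for all β₁ ∈ (1, √2). -/

import Mathlib

open Real Set intervalIntegral

noncomputable def K (k : ℝ) : ℝ :=
  ∫ θ in (0:ℝ)..(Real.pi/2), 1 / Real.sqrt (1 - k^2 * Real.sin θ ^ 2)

noncomputable def E (k : ℝ) : ℝ :=
  ∫ θ in (0:ℝ)..(Real.pi/2), Real.sqrt (1 - k^2 * Real.sin θ ^ 2)

theorem F_pos (β₁ : ℝ) (hβ₁ : β₁ ∈ Set.Ioo (1:ℝ) (Real.sqrt 2)) :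
    0 < E (Real.sqrt (2 * (β₁^2 - 1)) / β₁) +
        (β₁^2 - 2) * K (Real.sqrt (2 * (β₁^2 - 1)) / β₁) := by
  obtain ⟨h1, h2⟩ := hβ₁
  have hb0 : (0:ℝ) < β₁ := by linarith
  have hb2' : β₁ ^ 2 < 2 := by
    nlinarith [Real.sq_sqrt (show (0:ℝ) ≤ 2 by norm_num), Real.sqrt_nonneg 2]
  have hb1' : 1 < β₁ ^ 2 := by nlinarith
  set k : ℝ := Real.sqrt (2 * (β₁^2 - 1)) / β₁ with hk
  have hk2 : k ^ 2 * β₁ ^ 2 = 2 * (β₁ ^ 2 - 1) := by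
    rw [hk, div_pow, Real.sq_sqrt (by nlinarith)]
    field_simp
  have hk0 : 0 < k := by
    apply div_pos _ hb0
    exact Real.sqrt_pos.mpr (by nlinarith)
  have hk1 : k < 1 := by
    by_contra h
    push_neg at h
    have h2' : 1 ≤ k ^ 2 := by nlinarith
    nlinarith [hk2]
  -- inner function positivity
  have hupos : ∀ θ : ℝ, 0 < 1 - k ^ 2 * Real.sin θ ^ 2 := by
    intro θ
    nlinarith [Real.sin_sq_le_one θ, sq_nonneg (Real.sin θ), hk0, hk1, sq_nonneg k]
  set S : ℝ → ℝ := fun θ => Real.sqrt (1 - k ^ 2 * Real.sin θ ^ 2) with hS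
  have hSpos : ∀ θ : ℝ, 0 < S θ := fun θ => Real.sqrt_pos.mpr (hupos θ)
  have hS2 : ∀ θ : ℝ, S θ ^ 2 = 1 - k ^ 2 * Real.sin θ ^ 2 := fun θ =>
    Real.sq_sqrt (hupos θ).le
  have hScont : Continuous S := by
    apply Real.continuous_sqrt.comp
    continuity
  -- definitions
  set A : ℝ → ℝ := fun θ => (1 - (2 - k ^ 2) * Real.sin θ ^ 2) / S θ with hA
  set B : ℝ → ℝ := fun θ => (3 * k ^ 2 / 4) * Real.sin (2 * θ) ^ 2 / S θ with hB
  have hAcont : Continuous A := by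
    apply Continuous.div (by fun_prop) hScont (fun θ => (hSpos θ).ne')
  have hBcont : Continuous B := by
    apply Continuous.div (by fun_prop) hScont (fun θ => (hSpos θ).ne')
  -- derivative identity
  have hder : ∀ θ : ℝ, HasDerivAt (fun t => Real.sin t * Real.cos t * S t)
      (A θ - B θ) θ := by
    intro θ
    have hu : HasDerivAt (fun t => 1 - k ^ 2 * Real.sin t ^ 2)
        (-(k ^ 2 * (2 * Real.sin θ ^ 1 * Real.cos θ))) θ := by
      simpa using ((((Real.hasDerivAt_sin θ).pow 2).const_mul (k ^ 2)).const_sub (1:ℝ))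
    have hSd := hu.sqrt (hupos θ).ne'
    have h : HasDerivAt (fun i => Real.sin i * Real.cos i * Real.sqrt (1 - k ^ 2 * Real.sin i ^ 2)) _ θ :=
      ((Real.hasDerivAt_sin θ).fun_mul (Real.hasDerivAt_cos θ)).fun_mul hSd
    convert h using 1
    have hs2 := hS2 θ
    have hne := (hSpos θ).ne'
    have e : Real.sqrt (1 - k ^ 2 * Real.sin θ ^ 2) = S θ := rfl
    have hcs : Real.sin θ ^ 2 + Real.cos θ ^ 2 = 1 := Real.sin_sq_add_cos_sq θ
    rw [hA, hB]
    simp only [Real.sin_two_mul, pow_one]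
    rw [e]
    clear_value k S A B
    field_simp
    linear_combination (-8 * (Real.cos θ ^ 2 - Real.sin θ ^ 2) *
        (S θ ^ 2 + 1 - k ^ 2 * Real.sin θ ^ 2) + 8 - 8 * (2 - k ^ 2) * Real.sin θ ^ 2
        - 16 * k ^ 2 * Real.sin θ ^ 2 * Real.cos θ ^ 2) * hs2 +
      (-16 * k ^ 2 * (1 - k ^ 2 * Real.sin θ ^ 2) * Real.sin θ ^ 2
        - 8 * (1 - k ^ 2 * Real.sin θ ^ 2) ^ 2) * hcs
        + (16 * k ^ 2 * Real.sin θ ^ 2 * Real.cos θ ^ 2 - 8 * k ^ 2 * Real.sin θ ^ 2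
          + 20 * Real.sin θ ^ 2 - 4 * Real.cos θ ^ 2 - 8 + (8 * Real.cos θ ^ 2 - 8 * Real.sin θ ^ 2)
          * (S θ ^ 2 + 1 - k ^ 2 * Real.sin θ ^ 2)) * hs2
        + (-8 * k ^ 2 * Real.sin θ ^ 2 + (1 - k ^ 2 * Real.sin θ ^ 2) * (16 * k ^ 2 * Real.sin θ ^ 2 - 4)
          + 8 * (1 - k ^ 2 * Real.sin θ ^ 2) ^ 2) * hcs
  -- FTC
  have hGint : IntervalIntegrable (fun θ => A θ - B θ) MeasureTheory.volume 0 (Real.pi/2) :=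
    (hAcont.sub hBcont).intervalIntegrable _ _
  have hFTC : ∫ θ in (0:ℝ)..(Real.pi/2), (A θ - B θ) = 0 := by
    rw [intervalIntegral.integral_eq_sub_of_hasDerivAt (fun θ _ => hder θ) hGint]
    simp [hS]
  have hAint : IntervalIntegrable A MeasureTheory.volume 0 (Real.pi/2) :=
    hAcont.intervalIntegrable _ _
  have hBint : IntervalIntegrable B MeasureTheory.volume 0 (Real.pi/2) :=
    hBcont.intervalIntegrable _ _
  have hAB : ∫ θ in (0:ℝ)..(Real.pi/2), A θ = ∫ θ in (0:ℝ)..(Real.pi/2), B θ := by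
    have := intervalIntegral.integral_sub hAint hBint
    linarith [this ▸ hFTC]
  have hBpos : 0 < ∫ θ in (0:ℝ)..(Real.pi/2), B θ := by
    apply intervalIntegral_pos_of_pos_on hBint _ (by positivity)
    intro x hx
    have hsin : 0 < Real.sin (2 * x) :=
      Real.sin_pos_of_pos_of_lt_pi (by linarith [hx.1]) (by linarith [hx.2])
    have := hSpos x
    rw [hB]
    positivity
  -- relate to E and K
  have hEK : E k + (β₁ ^ 2 - 2) * K k
      = (β₁ ^ 2 - 1) * ∫ θ in (0:ℝ)..(Real.pi/2), A θ := by
    have hScont' : Continuous (fun θ => S θ + (β₁ ^ 2 - 2) * (1 / S θ)) := by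
      apply hScont.add
      apply Continuous.mul continuous_const
      exact Continuous.div continuous_const hScont (fun θ => (hSpos θ).ne')
    have hmul : Continuous fun θ => (β₁ ^ 2 - 2) * (1 / S θ) :=
      continuous_const.mul (continuous_const.div hScont fun θ => (hSpos θ).ne')
    have h1' : E k + (β₁ ^ 2 - 2) * K k
        = ∫ θ in (0:ℝ)..(Real.pi/2), (S θ + (β₁ ^ 2 - 2) * (1 / S θ)) := by
      have e1 : E k = ∫ θ in (0:ℝ)..(Real.pi/2), S θ := rfl
      have e2 : K k = ∫ θ in (0:ℝ)..(Real.pi/2), 1 / S θ := rfl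
      rw [e1, e2, ← intervalIntegral.integral_const_mul,
        ← intervalIntegral.integral_add (hScont.intervalIntegrable _ _)
          (hmul.intervalIntegrable _ _)]
    rw [h1', ← intervalIntegral.integral_const_mul]
    apply intervalIntegral.integral_congr
    intro θ _
    have hs2 := hS2 θ
    have hne := (hSpos θ).ne'
    rw [hA]
    field_simp
    nlinarith [hk2, hs2]
  rw [hEK, hAB]
  exact mul_pos (by nlinarith) hBpos
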